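/- Let I be a finite set, (H_i)_{i∈I} and (G_k)_{k∈K} finite families of real Hilbert spaces with direct sums 𝓗 and 𝓖. For each i ∈ I let φ_i : H_i → (−∞,∞] be proper lower semicontinuous convex; for each i, let f_i : 𝓗 → ℝ be such that f_i(·; x_{∖i}) is convex and Gâteaux differentiable in the i-th variable with partial gradient ∇_i f_i(x); for each k ∈ K let g_k : G_k → (−∞,∞] be proper lsc convex and L_k : 𝓗 → G_k bounded linear. Suppose (x̄, v̄*) ∈ 𝓗 ⊕ 𝓖 satisfies: for every i ∈ I, −∇_i f_i(x̄) − ∑_{k∈K} Π_i(L_k* v̄_k*) ∈ ∂φ_i(x̄_i), and for every k ∈ K, L_k x̄ ∈ ∂g_k*(v̄_k*). Then x̄ is a Nash equilibrium: for every i ∈ I, x̄_i minimizes the function x_i ↦ φ_i(x_i) + f_i(x_i; x̄_{∖i}) + ∑_{k∈K} g_k(L_k(x_i; x̄_{∖i})). -/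

import Mathlib

open scoped RealInnerProductSpace

/-- Subdifferential of an extended-real-valued function on a real Hilbert space. -/
def ESubdiff {E : Type*} [NormedAddCommGroup E] [InnerProductSpace ℝ E]
    (f : E → EReal) (x : E) : Set E :=
  {u | ∀ y, f x + ((⟪u, y - x⟫ : ℝ) : EReal) ≤ f y}

/-- Fenchel conjugate of an extended-real-valued function. -/
noncomputable def EConj {E : Type*} [NormedAddCommGroup E] [InnerProductSpace ℝ E]
    (f : E → EReal) (u : E) : EReal :=
  ⨆ y, (((⟪u, y⟫ : ℝ) : EReal) - f y)


set_option linter.unusedSectionVars false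

open Topology Filter

section AuxAll
variable {E : Type*} [NormedAddCommGroup E] [InnerProductSpace ℝ E] [CompleteSpace E]


def EEpi (g : E → EReal) : Set (E × ℝ) := {p | g p.1 ≤ (p.2 : EReal)}

lemma eepi_convex (g : E → EReal)
    (hconv : ∀ (x y : E) (a b : ℝ), 0 ≤ a → 0 ≤ b → a + b = 1 →
      g (a • x + b • y) ≤ (a : EReal) * g x + (b : EReal) * g y) :
    Convex ℝ (EEpi g) := by
  rintro p hp q hq a b ha hb hab
  simp only [EEpi, Set.mem_setOf_eq] at *
  calc g (a • p.1 + b • q.1) ≤ (a : EReal) * g p.1 + (b : EReal) * g q.1 :=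
        hconv _ _ _ _ ha hb hab
    _ ≤ (a : EReal) * (p.2 : EReal) + (b : EReal) * (q.2 : EReal) := by
        gcongr
    _ = (((a • p + b • q).2 : ℝ) : EReal) := by
        simp only [Prod.smul_snd, Prod.snd_add, smul_eq_mul]
        rw [← EReal.coe_mul, ← EReal.coe_mul, ← EReal.coe_add]

lemma eepi_closed (g : E → EReal) (hlsc : LowerSemicontinuous g) :
    IsClosed (EEpi g) := by
  rw [← isOpen_compl_iff, isOpen_iff_mem_nhds]
  rintro ⟨z, s⟩ hp
  simp only [Set.mem_compl_iff, EEpi, Set.mem_setOf_eq, not_le] at hp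
  obtain ⟨c, hc1, hc2⟩ := EReal.exists_between_coe_real hp
  have h1 : {z' : E | (c : EReal) < g z'} ∈ 𝓝 z := hlsc z _ hc2
  have h2 : Set.Iio c ∈ 𝓝 s := Iio_mem_nhds (by exact_mod_cast hc1)
  rw [nhds_prod_eq]
  refine Filter.mem_of_superset (Filter.prod_mem_prod h1 h2) ?_
  rintro ⟨z', s'⟩ ⟨hz', hs'⟩
  simp only [Set.mem_compl_iff, EEpi, Set.mem_setOf_eq, not_le]
  exact lt_trans (by exact_mod_cast hs') hz'

lemma eepi_separate (g : E → EReal)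
    (hconvS : Convex ℝ (EEpi g)) (hclosed : IsClosed (EEpi g))
    {p : E × ℝ} (hp : p ∉ EEpi g) :
    ∃ (u : E) (α c : ℝ), (⟪u, p.1⟫ + α * p.2 < c) ∧
      ∀ (z : E) (s : ℝ), g z ≤ (s : EReal) → c < ⟪u, z⟫ + α * s := by
  obtain ⟨f, c, hfp, hfS⟩ := geometric_hahn_banach_point_closed hconvS hclosed hp
  set u := (InnerProductSpace.toDual ℝ E).symm (f.comp (ContinuousLinearMap.inl ℝ E ℝ)) with hu
  have hdecomp : ∀ (z : E) (s : ℝ), f (z, s) = ⟪u, z⟫ + f (0, 1) * s := by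
    intro z s
    have hsplit : (z, s) = (z, (0:ℝ)) + s • ((0:E), (1:ℝ)) := by
      simp [Prod.ext_iff]
    rw [hsplit, map_add, map_smul]
    have h1 : ⟪u, z⟫ = f (z, 0) := by
      rw [hu, InnerProductSpace.toDual_symm_apply]
      rfl
    rw [h1, smul_eq_mul, mul_comm]
  refine ⟨u, f (0, 1), c, ?_, ?_⟩
  · rw [← hdecomp]; exact hfp
  · intro z s hzs
    have := hfS (z, s) hzs
    rwa [hdecomp] at this

lemma econj_le_ge (g : E → EReal) (v z : E) :
    ((⟪v, z⟫ : ℝ) : EReal) - g z ≤ EConj g v :=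
  le_iSup (fun y => ((⟪v, y⟫ : ℝ) : EReal) - g y) z

/-- Existence of a continuous affine minorant. -/
lemma exists_minorant (g : E → EReal)
    (hconvS : Convex ℝ (EEpi g)) (hclosed : IsClosed (EEpi g))
    (hproper : ∃ x, g x ≠ ⊤) (hbot : ∀ x, g x ≠ ⊥) :
    ∃ (v : E) (c : ℝ), ∀ z, ((⟪v, z⟫ + c : ℝ) : EReal) ≤ g z := by
  obtain ⟨z₀, hz₀⟩ := hproper
  have hz₀r : ((g z₀).toReal : EReal) = g z₀ := EReal.coe_toReal hz₀ (hbot z₀)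
  set r₀ := (g z₀).toReal with hr₀
  have hpmem : ((z₀, r₀ - 1) : E × ℝ) ∉ EEpi g := by
    simp only [EEpi, Set.mem_setOf_eq, not_le, ← hz₀r]
    exact_mod_cast (by linarith : r₀ - 1 < r₀)
  obtain ⟨u, α, c, hpt, hS⟩ := eepi_separate g hconvS hclosed hpmem
  have hpt' : ⟪u, z₀⟫ + α * (r₀ - 1) < c := hpt
  have h0 : c < ⟪u, z₀⟫ + α * r₀ := hS z₀ r₀ hz₀r.ge
  have hα : 0 < α := by nlinarith
  refine ⟨-(α⁻¹) • u, c / α, fun z => ?_⟩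
  rcases eq_or_ne (g z) ⊤ with h | h
  · simp [h]
  · have hzr : ((g z).toReal : EReal) = g z := EReal.coe_toReal h (hbot z)
    have hz := hS z (g z).toReal hzr.ge
    rw [← hzr]
    rw [EReal.coe_le_coe_iff]
    rw [real_inner_smul_left]
    have hαne : α ≠ 0 := ne_of_gt hα
    have hkey : -α⁻¹ * ⟪u, z⟫ + c / α = (c - ⟪u, z⟫) / α := by
      field_simp; ring
    rw [hkey, div_le_iff₀ hα]
    nlinarith


lemma econj_ne_bot (g : E → EReal) (hproper : ∃ x, g x ≠ ⊤) (hbot : ∀ x, g x ≠ ⊥) (w : E) :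
    EConj g w ≠ ⊥ := by
  obtain ⟨z₀, hz₀⟩ := hproper
  have hz₀r : ((g z₀).toReal : EReal) = g z₀ := EReal.coe_toReal hz₀ (hbot z₀)
  have h := econj_le_ge g w z₀
  rw [← hz₀r, ← EReal.coe_sub] at h
  intro hbot'
  rw [hbot', le_bot_iff] at h
  exact EReal.coe_ne_bot _ h

lemma econj_le (g : E → EReal) (hbot : ∀ x, g x ≠ ⊥) {w : E} {m : ℝ}
    (h : ∀ z, g z ≠ ⊤ → ⟪w, z⟫ - (g z).toReal ≤ m) : EConj g w ≤ (m : EReal) := by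
  refine iSup_le fun z => ?_
  rcases eq_or_ne (g z) ⊤ with hz | hz
  · rw [hz]
    rw [sub_eq_add_neg]
    simp
  · have hzr : ((g z).toReal : EReal) = g z := EReal.coe_toReal hz (hbot z)
    rw [← hzr, ← EReal.coe_sub]
    exact_mod_cast h z hz

lemma fenchel_moreau_aux (g : E → EReal)
    (hconvS : Convex ℝ (EEpi g)) (hclosed : IsClosed (EEpi g))
    (hproper : ∃ x, g x ≠ ⊤) (hbot : ∀ x, g x ≠ ⊥)
    (y : E) (r : ℝ) (hr : (r : EReal) < g y) :
    ∃ w : E, EConj g w ≠ ⊤ ∧ r < ⟪w, y⟫ - (EConj g w).toReal := by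
  obtain ⟨z₀, hz₀⟩ := hproper
  have hz₀r : ((g z₀).toReal : EReal) = g z₀ := EReal.coe_toReal hz₀ (hbot z₀)
  set r₀ := (g z₀).toReal with hr₀
  have hpmem : ((y, r) : E × ℝ) ∉ EEpi g := by
    simp only [EEpi, Set.mem_setOf_eq, not_le]; exact hr
  obtain ⟨u, α, c, hpt0, hS⟩ := eepi_separate g hconvS hclosed hpmem
  have hpt : ⟪u, y⟫ + α * r < c := hpt0
  have hαnn : 0 ≤ α := by
    by_contra hneg
    push_neg at hneg
    set s := max r₀ ((c - ⟪u, z₀⟫) / α) with hs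
    have hs1 : g z₀ ≤ (s : EReal) := by
      rw [← hz₀r]; exact_mod_cast le_max_left _ _
    have h3 := hS z₀ s hs1
    have hq : (c - ⟪u, z₀⟫) / α ≤ s := le_max_right _ _
    have h2 : α * s ≤ c - ⟪u, z₀⟫ := by
      have heq : α * ((c - ⟪u, z₀⟫) / α) = c - ⟪u, z₀⟫ := by
        rw [mul_comm]; exact div_mul_cancel₀ _ (ne_of_lt hneg)
      nlinarith
    linarith
  rcases hαnn.lt_or_eq with hα | hα0
  · -- α > 0
    set w := -(α⁻¹) • u with hw
    have hwin : ∀ z : E, ⟪w, z⟫ = -(α⁻¹) * ⟪u, z⟫ := fun z => real_inner_smul_left _ _ _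
    have hb : EConj g w ≤ ((-(c / α) : ℝ) : EReal) := by
      refine econj_le g hbot fun z hz => ?_
      have hzr : ((g z).toReal : EReal) = g z := EReal.coe_toReal hz (hbot z)
      have hcz := hS z (g z).toReal hzr.ge
      rw [hwin]
      have heq : -(α⁻¹) * ⟪u, z⟫ - (g z).toReal = (-⟪u, z⟫ - α * (g z).toReal) / α := by
        field_simp
      rw [heq, ← neg_div]
      gcongr
      linarith
    have hnetop : EConj g w ≠ ⊤ := by
      intro htop; rw [htop, top_le_iff] at hb; exact EReal.coe_ne_top _ hb
    have htr : (EConj g w).toReal ≤ -(c / α) := by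
      have := EReal.toReal_le_toReal hb (econj_ne_bot g ⟨z₀, hz₀⟩ hbot w) (EReal.coe_ne_top _)
      simpa using this
    refine ⟨w, hnetop, ?_⟩
    have hry : r < -(α⁻¹) * ⟪u, y⟫ + c / α := by
      have heq : -(α⁻¹) * ⟪u, y⟫ + c / α = (c - ⟪u, y⟫) / α := by
        field_simp; ring
      rw [heq, lt_div_iff₀ hα]
      nlinarith
    rw [hwin]
    linarith
  · -- α = 0
    obtain ⟨v₀, c₀, hmin⟩ := exists_minorant g hconvS hclosed ⟨z₀, hz₀⟩ hbot
    have hSd : ∀ z : E, g z ≠ ⊤ → c < ⟪u, z⟫ := by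
      intro z hz
      have hzr : ((g z).toReal : EReal) = g z := EReal.coe_toReal hz (hbot z)
      have := hS z (g z).toReal hzr.ge
      rw [← hα0] at this
      simpa using this
    have hd : 0 < c - ⟪u, y⟫ := by rw [← hα0] at hpt; simp at hpt; linarith
    set d := c - ⟪u, y⟫ with hdd
    clear_value d
    set lam := max 0 ((r - ⟪v₀, y⟫ - c₀) / d + 1) with hlam
    clear_value lam
    have hlam0 : 0 ≤ lam := hlam ▸ le_max_left _ _
    set w := v₀ - lam • u with hw
    have hwin : ∀ z : E, ⟪w, z⟫ = ⟪v₀, z⟫ - lam * ⟪u, z⟫ := by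
      intro z
      rw [hw, inner_sub_left, real_inner_smul_left]
    have hb : EConj g w ≤ ((-c₀ - lam * c : ℝ) : EReal) := by
      refine econj_le g hbot fun z hz => ?_
      have hzr : ((g z).toReal : EReal) = g z := EReal.coe_toReal hz (hbot z)
      have hminz : ⟪v₀, z⟫ + c₀ ≤ (g z).toReal := by
        have := hmin z; rw [← hzr] at this; exact_mod_cast this
      have hcz := hSd z hz
      have hmul : lam * c ≤ lam * ⟪u, z⟫ := mul_le_mul_of_nonneg_left hcz.le hlam0
      rw [hwin]
      linarith
    have hnetop : EConj g w ≠ ⊤ := by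
      intro htop; rw [htop, top_le_iff] at hb; exact EReal.coe_ne_top _ hb
    have htr : (EConj g w).toReal ≤ -c₀ - lam * c := by
      have := EReal.toReal_le_toReal hb (econj_ne_bot g ⟨z₀, hz₀⟩ hbot w) (EReal.coe_ne_top _)
      rwa [EReal.toReal_coe] at this
    refine ⟨w, hnetop, ?_⟩
    have hlamd : r - ⟪v₀, y⟫ - c₀ + d ≤ lam * d := by
      have h1 : (r - ⟪v₀, y⟫ - c₀) / d + 1 ≤ lam := hlam ▸ le_max_right _ _
      have h2 := mul_le_mul_of_nonneg_right h1 hd.le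
      have heq : ((r - ⟪v₀, y⟫ - c₀) / d + 1) * d = r - ⟪v₀, y⟫ - c₀ + d := by
        field_simp
      linarith
    rw [hwin]
    have hexp : lam * d = lam * c - lam * ⟪u, y⟫ := by rw [hdd]; ring
    linarith



lemma esubdiff_conj_transfer (g : E → EReal)
    (hproper : ∃ x, g x ≠ ⊤) (hbot : ∀ x, g x ≠ ⊥)
    (hlsc : LowerSemicontinuous g)
    (hconv : ∀ (x y : E) (a b : ℝ), 0 ≤ a → 0 ≤ b → a + b = 1 →
      g (a • x + b • y) ≤ (a : EReal) * g x + (b : EReal) * g y)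
    {y v : E} (h : ∀ w, EConj g v + ((⟪y, w - v⟫ : ℝ) : EReal) ≤ EConj g w) :
    ∃ gyr : ℝ, ((gyr : EReal) = g y) ∧ ∀ z, ((gyr + ⟪v, z - y⟫ : ℝ) : EReal) ≤ g z := by
  have hconvS := eepi_convex g hconv
  have hclosed := eepi_closed g hlsc
  have hnb : EConj g v ≠ ⊥ := econj_ne_bot g hproper hbot v
  have hnt : EConj g v ≠ ⊤ := by
    obtain ⟨v₀, c₀, hmin⟩ := exists_minorant g hconvS hclosed hproper hbot
    have hb : EConj g v₀ ≤ ((-c₀ : ℝ) : EReal) := by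
      refine econj_le g hbot fun z hz => ?_
      have hzr : ((g z).toReal : EReal) = g z := EReal.coe_toReal hz (hbot z)
      have hm := hmin z; rw [← hzr] at hm
      have := EReal.coe_le_coe_iff.1 hm
      linarith
    intro htop
    have hv := h v₀
    rw [htop, EReal.top_add_coe] at hv
    exact EReal.coe_ne_top _ (top_le_iff.1 (hv.trans hb))
  set s := (EConj g v).toReal with hsdef
  have hsr : ((s : ℝ) : EReal) = EConj g v := EReal.coe_toReal hnt hnb
  have hy : g y ≤ ((⟪v, y⟫ - s : ℝ) : EReal) := by
    by_contra hcon
    push_neg at hcon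
    obtain ⟨r, hr1, hr2⟩ := EReal.exists_between_coe_real hcon
    obtain ⟨w, hwnt, hwlt⟩ := fenchel_moreau_aux g hconvS hclosed hproper hbot y r hr2
    have hwnb : EConj g w ≠ ⊥ := econj_ne_bot g hproper hbot w
    have hwr : ((EConj g w).toReal : EReal) = EConj g w := EReal.coe_toReal hwnt hwnb
    have hsub := h w
    rw [← hsr, ← hwr, ← EReal.coe_add] at hsub
    have hreal : s + ⟪y, w - v⟫ ≤ (EConj g w).toReal := EReal.coe_le_coe_iff.1 hsub
    have hinner : ⟪y, w - v⟫ = ⟪w, y⟫ - ⟪v, y⟫ := by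
      rw [inner_sub_right, real_inner_comm y w, real_inner_comm y v]
    have hr1' : ⟪v, y⟫ - s < r := EReal.coe_lt_coe_iff.1 hr1
    linarith
  have hynt : g y ≠ ⊤ := by
    intro htop; rw [htop] at hy
    exact EReal.coe_ne_top _ (top_le_iff.1 hy)
  refine ⟨(g y).toReal, EReal.coe_toReal hynt (hbot y), fun z => ?_⟩
  have hyr : (((g y).toReal : ℝ) : EReal) = g y := EReal.coe_toReal hynt (hbot y)
  have hyreal : (g y).toReal ≤ ⟪v, y⟫ - s := by
    rw [← hyr] at hy; exact EReal.coe_le_coe_iff.1 hy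
  rcases eq_or_ne (g z) ⊤ with hz | hz
  · rw [hz]; exact le_top
  · have hzr : ((g z).toReal : EReal) = g z := EReal.coe_toReal hz (hbot z)
    have hfy := econj_le_ge g v z
    rw [← hzr, ← EReal.coe_sub, ← hsr] at hfy
    have hfyr : ⟪v, z⟫ - (g z).toReal ≤ s := EReal.coe_le_coe_iff.1 hfy
    rw [← hzr]
    rw [EReal.coe_le_coe_iff, inner_sub_right]
    linarith

lemma convex_gradient_ineq {F : Type*} [NormedAddCommGroup F] [InnerProductSpace ℝ F] [CompleteSpace F]
    {ψ : F → ℝ} {a u : F} (hconv : ConvexOn ℝ Set.univ ψ) (hg : HasGradientAt ψ u a) (b : F) :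
    ψ a + ⟪u, b - a⟫ ≤ ψ b := by
  set d := b - a with hd
  have haff : HasDerivAt (fun θ : ℝ => a + θ • d) d 0 := by
    simpa using ((hasDerivAt_id (0:ℝ)).smul_const d).const_add a
  have hF : HasFDerivAt ψ (InnerProductSpace.toDual ℝ F u) a := hg.hasFDerivAt
  have hF' : HasFDerivAt ψ (InnerProductSpace.toDual ℝ F u) ((fun θ : ℝ => a + θ • d) 0) := by
    simpa using hF
  have hcomp : HasDerivAt (fun θ : ℝ => ψ (a + θ • d)) ⟪u, d⟫ 0 := by
    simpa [InnerProductSpace.toDual_apply_apply, Function.comp_def] using hF'.comp_hasDerivAt 0 haff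
  rw [hasDerivAt_iff_tendsto_slope] at hcomp
  have hmono : 𝓝[>] (0:ℝ) ≤ 𝓝[≠] (0:ℝ) :=
    nhdsWithin_mono _ (fun x hx => ne_of_gt hx)
  have hslope : ∀ᶠ θ in 𝓝[>] (0:ℝ),
      slope (fun θ : ℝ => ψ (a + θ • d)) 0 θ ≤ ψ b - ψ a := by
    filter_upwards [Ioc_mem_nhdsGT_of_mem (Set.mem_Ico.2 ⟨le_refl (0:ℝ), zero_lt_one⟩)]
      with θ hθ
    obtain ⟨hθ0, hθ1⟩ := hθ
    have hcv := hconv.2 (Set.mem_univ a) (Set.mem_univ b)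
      (by linarith : (0:ℝ) ≤ 1 - θ) hθ0.le (by ring)
    have hpt : a + θ • d = (1 - θ) • a + θ • b := by
      rw [hd, smul_sub, sub_smul, one_smul]; abel
    have hval : ψ (a + θ • d) ≤ (1 - θ) * ψ a + θ * ψ b := by
      rw [hpt]; simpa using hcv
    have h0 : (fun θ : ℝ => ψ (a + θ • d)) 0 = ψ a := by simp
    rw [slope_def_field]
    have h0' : a + (0:ℝ) • d = a := by simp
    rw [h0', sub_zero, div_le_iff₀ hθ0]
    nlinarith
  have := le_of_tendsto (hcomp.mono_left hmono) hslope
  linarith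

end AuxAll


lemma ereal_coe_sum {ι : Type*} (s : Finset ι) (f : ι → ℝ) :
    ((∑ k ∈ s, f k : ℝ) : EReal) = ∑ k ∈ s, ((f k : ℝ) : EReal) :=
  map_sum (⟨⟨Real.toEReal, EReal.coe_zero⟩, EReal.coe_add⟩ : ℝ →+ EReal) f s

theorem stmt6
    {I K : Type*} [Fintype I] [Fintype K] [DecidableEq I]
    {H : I → Type*} [∀ i, NormedAddCommGroup (H i)] [∀ i, InnerProductSpace ℝ (H i)]
    [∀ i, CompleteSpace (H i)] [CompleteSpace (PiLp 2 H)]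
    {G : K → Type*} [∀ k, NormedAddCommGroup (G k)] [∀ k, InnerProductSpace ℝ (G k)]
    [∀ k, CompleteSpace (G k)]
    (φ : ∀ i, H i → EReal)
    (hφproper : ∀ i, ∃ x, φ i x ≠ ⊤) (hφbot : ∀ i x, φ i x ≠ ⊥)
    (hφlsc : ∀ i, LowerSemicontinuous (φ i))
    (hφconv : ∀ i (x y : H i) (a b : ℝ), 0 ≤ a → 0 ≤ b → a + b = 1 →
      φ i (a • x + b • y) ≤ (a : EReal) * φ i x + (b : EReal) * φ i y)
    (f : I → PiLp 2 H → ℝ)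
    (grad : ∀ i, PiLp 2 H → H i)
    (hfconv : ∀ i (x : PiLp 2 H),
      ConvexOn ℝ Set.univ (fun t : H i => f i (WithLp.toLp 2 (Function.update x i t))))
    (hfgrad : ∀ i (x : PiLp 2 H),
      HasGradientAt (fun t : H i => f i (WithLp.toLp 2 (Function.update x i t))) (grad i x) (x i))
    (g : ∀ k, G k → EReal)
    (hgproper : ∀ k, ∃ y, g k y ≠ ⊤) (hgbot : ∀ k y, g k y ≠ ⊥)
    (hglsc : ∀ k, LowerSemicontinuous (g k))
    (hgconv : ∀ k (x y : G k) (a b : ℝ), 0 ≤ a → 0 ≤ b → a + b = 1 →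
      g k (a • x + b • y) ≤ (a : EReal) * g k x + (b : EReal) * g k y)
    (L : ∀ k, PiLp 2 H →L[ℝ] G k)
    (xbar : PiLp 2 H) (vbar : ∀ k, G k)
    (h1 : ∀ i,
      (-(grad i xbar) - ∑ k, (ContinuousLinearMap.adjoint (L k)) (vbar k) i)
        ∈ ESubdiff (φ i) (xbar i))
    (h2 : ∀ k, L k xbar ∈ ESubdiff (EConj (g k)) (vbar k)) :
    ∀ i (t : H i),
      φ i (xbar i) + ((f i xbar : ℝ) : EReal) + ∑ k, g k (L k xbar)
        ≤ φ i t + ((f i (WithLp.toLp 2 (Function.update xbar i t)) : ℝ) : EReal)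
            + ∑ k, g k (L k (WithLp.toLp 2 (Function.update xbar i t))) := by

  intro i t
  set y : PiLp 2 H := WithLp.toLp 2 (Function.update xbar i t) with hy
  set Δ := t - xbar i with hΔ
  set u := -(grad i xbar) - ∑ k, (ContinuousLinearMap.adjoint (L k)) (vbar k) i with hu
  have hφsub := h1 i
  have hφnt : φ i (xbar i) ≠ ⊤ := by
    obtain ⟨x', hx'⟩ := hφproper i
    intro htop
    have hh := hφsub x'
    rw [htop, EReal.top_add_coe] at hh
    exact hx' (top_le_iff.1 hh)
  set p := (φ i (xbar i)).toReal with hp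
  have hpr : ((p : ℝ) : EReal) = φ i (xbar i) := EReal.coe_toReal hφnt (hφbot i _)
  have hA : ((p + ⟪u, Δ⟫ : ℝ) : EReal) ≤ φ i t := by
    have hh := hφsub t
    rwa [← hpr, ← EReal.coe_add] at hh
  have hB : f i xbar + ⟪grad i xbar, Δ⟫ ≤ f i y := by
    have hh := convex_gradient_ineq (hfconv i xbar) (hfgrad i xbar) t
    rwa [Function.update_eq_self i xbar.ofLp, WithLp.toLp_ofLp] at hh
  have hC : ∀ k, ∃ q : ℝ, ((q : EReal) = g k (L k xbar)) ∧
      ((q + ⟪(ContinuousLinearMap.adjoint (L k)) (vbar k) i, Δ⟫ : ℝ) : EReal)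
        ≤ g k (L k y) := by
    intro k
    obtain ⟨q, hq, hqle⟩ := esubdiff_conj_transfer (g k) (hgproper k) (hgbot k)
      (hglsc k) (hgconv k) (h2 k)
    refine ⟨q, hq, ?_⟩
    have hh := hqle (L k y)
    have hinner : ⟪vbar k, L k y - L k xbar⟫
        = ⟪(ContinuousLinearMap.adjoint (L k)) (vbar k) i, Δ⟫ := by
      rw [← map_sub, ← ContinuousLinearMap.adjoint_inner_left, PiLp.inner_apply]
      rw [Finset.sum_eq_single i]
      · congr 1
        simp [hy, hΔ]
      · intro j _ hj
        have hz : (y - xbar) j = 0 := by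
          simp [hy, Function.update_of_ne hj]
        rw [hz, inner_zero_right]
      · intro hi; exact absurd (Finset.mem_univ i) hi
    rwa [hinner] at hh
  choose q hq hqle using hC
  have hU : ⟪u, Δ⟫ = -⟪grad i xbar, Δ⟫
      - ∑ k, ⟪(ContinuousLinearMap.adjoint (L k)) (vbar k) i, Δ⟫ := by
    rw [hu, inner_sub_left, inner_neg_left]
    congr 1
    exact sum_inner _ _ _
  have hLHS : φ i (xbar i) + ((f i xbar : ℝ) : EReal) + ∑ k, g k (L k xbar)
      = ((p + f i xbar + ∑ k, q k : ℝ) : EReal) := by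
    rw [← hpr]
    have hsum : ∑ k, g k (L k xbar) = ((∑ k, q k : ℝ) : EReal) := by
      rw [ereal_coe_sum]
      exact Finset.sum_congr rfl fun k _ => (hq k).symm
    rw [hsum, ← EReal.coe_add, ← EReal.coe_add]
  have hsumy : ((∑ k, (q k + ⟪(ContinuousLinearMap.adjoint (L k)) (vbar k) i, Δ⟫) : ℝ) : EReal)
      ≤ ∑ k, g k (L k y) := by
    rw [ereal_coe_sum]
    exact Finset.sum_le_sum fun k _ => hqle k
  rw [hLHS]
  have hreal : p + f i xbar + ∑ k, q k
      ≤ (p + ⟪u, Δ⟫) + f i y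
        + ∑ k, (q k + ⟪(ContinuousLinearMap.adjoint (L k)) (vbar k) i, Δ⟫) := by
    rw [Finset.sum_add_distrib]
    rw [hU] at *
    linarith
  calc ((p + f i xbar + ∑ k, q k : ℝ) : EReal)
      ≤ (((p + ⟪u, Δ⟫) + f i y
          + ∑ k, (q k + ⟪(ContinuousLinearMap.adjoint (L k)) (vbar k) i, Δ⟫) : ℝ) : EReal) := by
        exact_mod_cast hreal
    _ ≤ φ i t + ((f i y : ℝ) : EReal) + ∑ k, g k (L k y) := by
        rw [EReal.coe_add, EReal.coe_add]
        exact add_le_add (add_le_add hA le_rfl) hsumy
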